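/- The Myerson payments of the Uniform Price Auction respect budgets: for each player i, the payment π_i = v_i·x_i(v_i, v_{−i}) − ∫_0^{v_i} x_i(u, v_{−i}) du satisfies π_i ≤ B_i. In particular, for players i ≤ k the allocation x_i is constant for all values above the market clearing price p, so π_i ≤ p·x_i = B_i, and in Case II player k+1 pays at most v_{k+1}·x_{k+1} < B_{k+1}. -/

import Mathlib

open Finset

/-- Permutation sorting the values in non-increasing order. -/
noncomputable def sortPerm {n : ℕ} (v : Fin n → ℝ) : Equiv.Perm (Fin n) :=
  Tuple.sort (fun i => -v i)

/-- `j`-th highest value (0-indexed), `0` for `j ≥ n`. -/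
noncomputable def sortedVal {n : ℕ} (v : Fin n → ℝ) (j : ℕ) : ℝ :=
  if h : j < n then v (sortPerm v ⟨j, h⟩) else 0

/-- Budget of the player with the `j`-th highest value (0-indexed). -/
noncomputable def sortedBud {n : ℕ} (v B : Fin n → ℝ) (j : ℕ) : ℝ :=
  if h : j < n then B (sortPerm v ⟨j, h⟩) else 0

open Classical in
/-- `kstar v B` is the maximum `k` such that the sum of the `k` largest-value
players' budgets is at most the `k`-th highest value. -/
noncomputable def kstar {n : ℕ} (v B : Fin n → ℝ) : ℕ :=
  Nat.findGreatest
    (fun k => ∑ j ∈ range k, sortedBud v B j ≤ sortedVal v (k-1)) n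

/-- Allocation of the Uniform Price Auction to the player of rank `j`
(0-indexed): Case I if `∑_{j≤k} B_j > v_{k+1}`, Case II otherwise. -/
noncomputable def allocSorted {n : ℕ} (v B : Fin n → ℝ) (j : ℕ) : ℝ :=
  let k := kstar v B
  let S := ∑ i ∈ range k, sortedBud v B i
  if sortedVal v k < S then
    (if j < k then sortedBud v B j / S else 0)
  else if j < k then sortedBud v B j / sortedVal v k
  else if j = k then 1 - S / sortedVal v k
  else 0

/-- Allocation of the Uniform Price Auction to player `i`. -/
noncomputable def UPA {n : ℕ} (v B : Fin n → ℝ) (i : Fin n) : ℝ :=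
  allocSorted v B (((sortPerm v).symm i : Fin n) : ℕ)

/-! ### Auxiliary definitions -/

/-- `a` beats `b` : strictly higher value, or equal value and smaller index. -/
def beats {n : ℕ} (w : Fin n → ℝ) (a b : Fin n) : Prop :=
  w b < w a ∨ (w a = w b ∧ a < b)

noncomputable def svA {n : ℕ} (v : Fin n → ℝ) (σ : Equiv.Perm (Fin n)) (j : ℕ) : ℝ :=
  if h : j < n then v (σ ⟨j, h⟩) else 0

noncomputable def sbA {n : ℕ} (B : Fin n → ℝ) (σ : Equiv.Perm (Fin n)) (j : ℕ) : ℝ :=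
  if h : j < n then B (σ ⟨j, h⟩) else 0

open Classical in
noncomputable def kkA {n : ℕ} (v B : Fin n → ℝ) (σ : Equiv.Perm (Fin n)) : ℕ :=
  Nat.findGreatest (fun k => ∑ j ∈ range k, sbA B σ j ≤ svA v σ (k-1)) n

noncomputable def gA {n : ℕ} (v B : Fin n → ℝ) (σ : Equiv.Perm (Fin n)) (j : ℕ) : ℝ :=
  let k := kkA v B σ
  let S := ∑ t ∈ range k, sbA B σ t
  if svA v σ k < S then
    (if j < k then sbA B σ j / S else 0)
  else if j < k then sbA B σ j / svA v σ k
  else if j = k then 1 - S / svA v σ k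
  else 0

lemma svA_sort {n : ℕ} (v : Fin n → ℝ) (j : ℕ) : svA v (sortPerm v) j = sortedVal v j := rfl
lemma sbA_sort {n : ℕ} (v B : Fin n → ℝ) (j : ℕ) : sbA B (sortPerm v) j = sortedBud v B j := rfl
lemma kkA_sort {n : ℕ} (v B : Fin n → ℝ) : kkA v B (sortPerm v) = kstar v B := rfl
lemma gA_sort {n : ℕ} (v B : Fin n → ℝ) (j : ℕ) : gA v B (sortPerm v) j = allocSorted v B j := rfl

lemma UPA_eq_gA {n : ℕ} (v B : Fin n → ℝ) (i : Fin n) :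
    UPA v B i = gA v B (sortPerm v) (((sortPerm v).symm i : Fin n) : ℕ) := rfl

lemma sortPerm_symm_lt_iff {n : ℕ} (w : Fin n → ℝ) (a b : Fin n) :
    (sortPerm w).symm a < (sortPerm w).symm b ↔ beats w a b := by
  have hs : StrictMono ((sortPerm w).trans (Tuple.graphEquiv₁ fun t => -w t)) :=
    Tuple.eq_sort_iff'.mp rfl
  have h2 := hs.lt_iff_lt (a := (sortPerm w).symm a) (b := (sortPerm w).symm b)
  rw [← h2]
  simp only [Equiv.trans_apply, Equiv.apply_symm_apply]
  constructor
  · intro h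
    have h3 := Prod.Lex.lt_iff.1 (Subtype.mk_lt_mk.mp h)
    simp only [neg_lt_neg_iff, neg_inj] at h3
    rcases h3 with h3 | ⟨h3, h4⟩
    · exact Or.inl (by have h3' : -w a < -w b := h3; linarith)
    · exact Or.inr ⟨by have h3' : -w a = -w b := h3; linarith, h4⟩
  · intro h
    apply Subtype.mk_lt_mk.mpr
    apply Prod.Lex.lt_iff.2
    rcases h with h | ⟨h3, h4⟩
    · exact Or.inl (show -w a < -w b by linarith)
    · exact Or.inr ⟨show -w a = -w b by linarith, h4⟩

open Classical in
lemma rank_eq_card {n : ℕ} (w : Fin n → ℝ) (b : Fin n) :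
    (((sortPerm w).symm b : Fin n) : ℕ) = (univ.filter fun c => beats w c b).card := by
  have h1 : (univ.filter fun c => beats w c b)
      = Finset.image (sortPerm w) (univ.filter fun s => s < (sortPerm w).symm b) := by
    ext c
    simp only [mem_filter, mem_univ, true_and, Finset.mem_image]
    constructor
    · intro hc
      refine ⟨(sortPerm w).symm c, ?_, Equiv.apply_symm_apply _ _⟩
      exact (sortPerm_symm_lt_iff w c b).mpr hc
    · rintro ⟨s, hs, rfl⟩
      rw [← sortPerm_symm_lt_iff w]
      simpa using hs
  rw [h1, Finset.card_image_of_injective _ (Equiv.injective _)]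
  have h2 : (univ.filter fun s : Fin n => s < (sortPerm w).symm b)
      = Finset.Iio ((sortPerm w).symm b) := by
    ext s; simp
  rw [h2, Fin.card_Iio]

lemma sortedVal_anti {n : ℕ} (v : Fin n → ℝ) {a b : ℕ} (hab : a ≤ b) (hb : b < n) :
    sortedVal v b ≤ sortedVal v a := by
  have ha : a < n := lt_of_le_of_lt hab hb
  have h := Tuple.monotone_sort (fun t => -v t)
    (a := ⟨a, ha⟩) (b := ⟨b, hb⟩) hab
  simp only [Function.comp_apply] at h
  rw [sortedVal, sortedVal, dif_pos ha, dif_pos hb]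
  have : -v (Tuple.sort (fun t => -v t) ⟨a, ha⟩) ≤ -v (Tuple.sort (fun t => -v t) ⟨b, hb⟩) := h
  rw [sortPerm]
  linarith

lemma sortedBud_nonneg {n : ℕ} (w B : Fin n → ℝ) (hB : ∀ t, 0 ≤ B t) (j : ℕ) :
    0 ≤ sortedBud w B j := by
  rw [sortedBud]; split
  · exact hB _
  · exact le_refl 0

lemma allocSorted_bounds {n : ℕ} (w B : Fin n → ℝ) (hB : ∀ t, 0 ≤ B t) (j : ℕ) :
    0 ≤ allocSorted w B j ∧ allocSorted w B j ≤ 1 := by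
  set k := kstar w B with hk
  set S := ∑ i ∈ range k, sortedBud w B i with hS
  have hS0 : 0 ≤ S := Finset.sum_nonneg fun t _ => sortedBud_nonneg w B hB t
  have hterm : ∀ t, t < k → sortedBud w B t ≤ S := fun t ht =>
    Finset.single_le_sum (fun r _ => sortedBud_nonneg w B hB r) (mem_range.mpr ht)
  rw [allocSorted]
  simp only [← hk, ← hS]
  split_ifs with h1 h2 h3 h4
  · -- Case I, j < k : sortedBud / S
    constructor
    · exact div_nonneg (sortedBud_nonneg w B hB j) hS0
    · rcases eq_or_lt_of_le hS0 with hS1 | hS1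
      · have : sortedBud w B j = 0 :=
          le_antisymm (by have := hterm j h2; linarith) (sortedBud_nonneg w B hB j)
        simp [this]
      · rw [div_le_one hS1]; exact hterm j h2
  · exact ⟨le_refl _, zero_le_one⟩
  · -- Case II, j < k
    have hvS : S ≤ sortedVal w k := not_lt.mp h1
    have hv0 : 0 ≤ sortedVal w k := le_trans hS0 hvS
    constructor
    · exact div_nonneg (sortedBud_nonneg w B hB j) hv0
    · rcases eq_or_lt_of_le hv0 with hv1 | hv1
      · have : sortedBud w B j = 0 := by
          have := hterm j h3
          have := sortedBud_nonneg w B hB j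
          nlinarith
        simp [this]
      · rw [div_le_one hv1]; exact le_trans (hterm j h3) hvS
  · -- j = k : 1 - S / sortedVal
    have hvS : S ≤ sortedVal w k := not_lt.mp h1
    have hv0 : 0 ≤ sortedVal w k := le_trans hS0 hvS
    constructor
    · rcases eq_or_lt_of_le hv0 with hv1 | hv1
      · have : S = 0 := le_antisymm (by linarith) hS0
        simp [this]
      · have : S / sortedVal w k ≤ 1 := by rw [div_le_one hv1]; exact hvS
        linarith
    · have : 0 ≤ S / sortedVal w k := div_nonneg hS0 hv0
      linarith
  · exact ⟨le_refl _, zero_le_one⟩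

/-! ### Measurability -/

lemma meas_coord {n : ℕ} (v : Fin n → ℝ) (i t : Fin n) :
    Measurable fun u : ℝ => Function.update v i u t := by
  by_cases h : t = i
  · subst h; simp only [Function.update_self]; exact measurable_id
  · simp only [Function.update_of_ne h]; exact measurable_const

lemma meas_svA {n : ℕ} (v : Fin n → ℝ) (i : Fin n) (σ : Equiv.Perm (Fin n)) (j : ℕ) :
    Measurable fun u : ℝ => svA (Function.update v i u) σ j := by
  by_cases h : j < n
  · simp only [svA, dif_pos h]; exact meas_coord v i _
  · simp only [svA, dif_neg h]; exact measurable_const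

lemma meas_kkA_set {n : ℕ} (v B : Fin n → ℝ) (i : Fin n) (σ : Equiv.Perm (Fin n)) (k : ℕ) :
    MeasurableSet {u : ℝ | kkA (Function.update v i u) B σ = k} := by
  classical
  have hset : {u : ℝ | kkA (Function.update v i u) B σ = k} =
      {u : ℝ | k ≤ n} ∩
      ({u : ℝ | k ≠ 0 → ∑ j ∈ Finset.range k, sbA B σ j ≤ svA (Function.update v i u) σ (k-1)} ∩
       ⋂ m : ℕ, {u : ℝ | k < m → m ≤ n →
          ¬ (∑ j ∈ Finset.range m, sbA B σ j ≤ svA (Function.update v i u) σ (m-1))}) := by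
    ext u
    simp only [Set.mem_inter_iff, Set.mem_iInter, Set.mem_setOf_eq, kkA,
      Nat.findGreatest_eq_iff]
  rw [hset]
  refine (MeasurableSet.const _).inter (MeasurableSet.inter ?_ (MeasurableSet.iInter fun m => ?_))
  · by_cases hk : k = 0
    · simp only [hk, ne_eq, not_true_eq_false, false_implies]
      exact MeasurableSet.univ
    · simp only [hk, ne_eq, not_false_eq_true, true_implies]
      exact measurableSet_le measurable_const (meas_svA v i σ _)
  · by_cases h1 : k < m
    · by_cases h2 : m ≤ n
      · simp only [h1, h2, true_implies, not_le]
        exact measurableSet_lt (meas_svA v i σ _) measurable_const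
      · simp only [h2, false_implies, implies_true, Set.setOf_true]
        exact MeasurableSet.univ
    · simp only [h1, false_implies, Set.setOf_true]
      exact MeasurableSet.univ

lemma meas_gA {n : ℕ} (v B : Fin n → ℝ) (i : Fin n) (σ : Equiv.Perm (Fin n)) (j : ℕ) :
    Measurable fun u : ℝ => gA (Function.update v i u) B σ j := by
  classical
  have key : ∀ u : ℝ, gA (Function.update v i u) B σ j =
      ∑ k ∈ Finset.range (n+1),
        if kkA (Function.update v i u) B σ = k then
          (if svA (Function.update v i u) σ k < ∑ t ∈ Finset.range k, sbA B σ t then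
            (if j < k then sbA B σ j / ∑ t ∈ Finset.range k, sbA B σ t else 0)
          else if j < k then sbA B σ j / svA (Function.update v i u) σ k
          else if j = k then 1 - (∑ t ∈ Finset.range k, sbA B σ t) / svA (Function.update v i u) σ k
          else 0)
        else 0 := by
    intro u
    have hmem : kkA (Function.update v i u) B σ ∈ Finset.range (n+1) :=
      Finset.mem_range.mpr (Nat.lt_succ_of_le (Nat.findGreatest_le n))
    rw [Finset.sum_ite_eq (Finset.range (n+1)) (kkA (Function.update v i u) B σ), if_pos hmem]
    rfl
  rw [show (fun u : ℝ => gA (Function.update v i u) B σ j) = _ from funext key]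
  apply Finset.measurable_sum
  intro k _
  apply Measurable.ite (meas_kkA_set v B i σ k) _ measurable_const
  apply Measurable.ite (measurableSet_lt (meas_svA v i σ k) measurable_const) measurable_const
  by_cases hj : j < k
  · simp only [hj, if_true]
    exact measurable_const.div (meas_svA v i σ k)
  · simp only [hj, if_false]
    by_cases hj2 : j = k
    · simp only [hj2, if_true]
      exact measurable_const.sub (measurable_const.div (meas_svA v i σ k))
    · simp only [hj2, if_false]
      exact measurable_const

lemma meas_sortset {n : ℕ} (v : Fin n → ℝ) (i : Fin n) (σ : Equiv.Perm (Fin n)) :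
    MeasurableSet {u : ℝ | sortPerm (Function.update v i u) = σ} := by
  have hset : {u : ℝ | sortPerm (Function.update v i u) = σ} =
      (⋂ s : Fin n, ⋂ t : Fin n, {u : ℝ | s ≤ t →
        -(Function.update v i u (σ s)) ≤ -(Function.update v i u (σ t))}) ∩
      (⋂ s : Fin n, ⋂ t : Fin n, {u : ℝ | s < t →
        -(Function.update v i u (σ s)) = -(Function.update v i u (σ t)) → σ s < σ t}) := by
    ext u
    simp only [Set.mem_inter_iff, Set.mem_iInter, Set.mem_setOf_eq]
    rw [sortPerm, eq_comm, Tuple.eq_sort_iff]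
    constructor
    · rintro ⟨h1, h2⟩
      exact ⟨fun s t hst => h1 hst, h2⟩
    · rintro ⟨h1, h2⟩
      exact ⟨fun s t hst => h1 s t hst, h2⟩
  rw [hset]
  refine MeasurableSet.inter (MeasurableSet.iInter fun s => MeasurableSet.iInter fun t => ?_)
    (MeasurableSet.iInter fun s => MeasurableSet.iInter fun t => ?_)
  · by_cases hst : s ≤ t
    · simp only [hst, true_implies]
      exact measurableSet_le ((meas_coord v i (σ s)).neg) ((meas_coord v i (σ t)).neg)
    · simp only [hst, false_implies, Set.setOf_true]
      exact MeasurableSet.univ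
  · by_cases hst : s < t
    · by_cases hσ : σ s < σ t
      · simp only [hst, hσ, implies_true, true_implies, Set.setOf_true]
        exact MeasurableSet.univ
      · simp only [hst, hσ, true_implies, imp_false]
        have : {u : ℝ | ¬ -(Function.update v i u (σ s)) = -(Function.update v i u (σ t))}
            = {u : ℝ | Function.update v i u (σ s) = Function.update v i u (σ t)}ᶜ := by
          ext u; simp
        rw [this]
        refine MeasurableSet.compl ?_
        have : {u : ℝ | Function.update v i u (σ s) = Function.update v i u (σ t)}
            = (fun u => Function.update v i u (σ s) - Function.update v i u (σ t)) ⁻¹' {0} := by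
          ext u; simp [sub_eq_zero]
        rw [this]
        exact ((meas_coord v i (σ s)).sub (meas_coord v i (σ t))) (measurableSet_singleton 0)
    · simp only [hst, false_implies, Set.setOf_true]
      exact MeasurableSet.univ

lemma meas_UPA {n : ℕ} (v B : Fin n → ℝ) (i : Fin n) :
    Measurable fun u : ℝ => UPA (Function.update v i u) B i := by
  classical
  have key : ∀ u : ℝ, UPA (Function.update v i u) B i =
      ∑ σ : Equiv.Perm (Fin n),
        if sortPerm (Function.update v i u) = σ then
          gA (Function.update v i u) B σ ((σ.symm i : Fin n) : ℕ) else 0 := by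
    intro u
    rw [Fintype.sum_ite_eq (sortPerm (Function.update v i u))]
    rfl
  rw [show (fun u : ℝ => UPA (Function.update v i u) B i) = _ from funext key]
  apply Finset.measurable_sum
  intro σ _
  exact Measurable.ite (meas_sortset v i σ) (meas_gA v B i σ _) measurable_const

/-! ### Constancy of the allocation above the price -/

lemma val_rank {n : ℕ} (v : Fin n → ℝ) (b : Fin n) :
    v b = sortedVal v (((sortPerm v).symm b : Fin n) : ℕ) := by
  rw [sortedVal, dif_pos ((sortPerm v).symm b).isLt]
  rw [Fin.eta ((sortPerm v).symm b) ((sortPerm v).symm b).isLt, Equiv.apply_symm_apply]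

lemma bud_rank {n : ℕ} (v B : Fin n → ℝ) (b : Fin n) :
    B b = sortedBud v B (((sortPerm v).symm b : Fin n) : ℕ) := by
  rw [sortedBud, dif_pos ((sortPerm v).symm b).isLt]
  rw [Fin.eta ((sortPerm v).symm b) ((sortPerm v).symm b).isLt, Equiv.apply_symm_apply]

lemma sum_sortedBud_all {n : ℕ} (w B : Fin n → ℝ) :
    ∑ t ∈ range n, sortedBud w B t = ∑ a, B a := by
  rw [Finset.sum_range]
  have h : ∀ t : Fin n, sortedBud w B (t : ℕ) = B (sortPerm w t) := by
    intro t
    rw [sortedBud, dif_pos t.isLt, Fin.eta t t.isLt]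
  rw [Finset.sum_congr rfl (fun t _ => h t)]
  exact Equiv.sum_comp (sortPerm w) B

lemma constancy {n : ℕ} (v B : Fin n → ℝ) (hv : ∀ t, 0 < v t) (hB : ∀ t, 0 < B t)
    (i : Fin n) (hj : (((sortPerm v).symm i : Fin n) : ℕ) < kstar v B)
    {u : ℝ}
    (hu1 : (if sortedVal v (kstar v B) < ∑ t ∈ range (kstar v B), sortedBud v B t
            then ∑ t ∈ range (kstar v B), sortedBud v B t
            else sortedVal v (kstar v B)) < u)
    (hu2 : u ≤ v i) :
    UPA (Function.update v i u) B i = UPA v B i := by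
  classical
  have hn : 0 < n := i.pos
  set k := kstar v B with hkdef
  set w := Function.update v i u with hwdef
  have hk_le : k ≤ n := Nat.findGreatest_le n
  have hk1 : 1 ≤ k := by omega
  -- P(k) holds for v
  have hPk : ∑ t ∈ range k, sortedBud v B t ≤ sortedVal v (k-1) := by
    have hP0 : ∑ t ∈ range 0, sortedBud v B t ≤ sortedVal v (0-1) := by
      simp only [range_zero, sum_empty]
      rw [sortedVal, dif_pos hn]
      exact (hv _).le
    rw [hkdef]
    unfold kstar
    exact Nat.findGreatest_spec
      (P := fun m => ∑ t ∈ range m, sortedBud v B t ≤ sortedVal v (m-1)) (Nat.zero_le n) hP0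
  have hgreatest : ∀ m, k < m → m ≤ n →
      ¬ (∑ t ∈ range m, sortedBud v B t ≤ sortedVal v (m-1)) := by
    intro m h1 h2
    rw [hkdef] at h1
    unfold kstar at h1
    exact Nat.findGreatest_is_greatest h1 h2
  -- bounds on u
  have hSu : ∑ t ∈ range k, sortedBud v B t < u := by
    by_cases hcase : sortedVal v k < ∑ t ∈ range k, sortedBud v B t
    · rwa [if_pos hcase] at hu1
    · rw [if_neg hcase] at hu1
      exact lt_of_le_of_lt (not_lt.mp hcase) hu1
  have hvku : sortedVal v k < u := by
    by_cases hcase : sortedVal v k < ∑ t ∈ range k, sortedBud v B t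
    · rw [if_pos hcase] at hu1
      exact hcase.trans hu1
    · rwa [if_neg hcase] at hu1
  -- low-ranked players have value below u
  have hub : ∀ b : Fin n, k ≤ (((sortPerm v).symm b : Fin n) : ℕ) → v b < u := by
    intro b hb
    rw [val_rank v b]
    exact lt_of_le_of_lt (sortedVal_anti v hb ((sortPerm v).symm b).isLt) hvku
  have hbne : ∀ b : Fin n, k ≤ (((sortPerm v).symm b : Fin n) : ℕ) → b ≠ i := by
    intro b hb hbi
    rw [hbi] at hb
    omega
  have hbeats_w : ∀ b : Fin n, k ≤ (((sortPerm v).symm b : Fin n) : ℕ) → beats w i b := by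
    intro b hb
    left
    rw [hwdef, Function.update_of_ne (hbne b hb), Function.update_self]
    exact hub b hb
  have hbeats_v : ∀ b : Fin n, k ≤ (((sortPerm v).symm b : Fin n) : ℕ) → beats v i b := by
    intro b hb
    rw [← sortPerm_symm_lt_iff]
    rw [Fin.lt_def]
    omega
  -- ranks of low-ranked players are preserved
  have hrank_eq : ∀ b : Fin n, k ≤ (((sortPerm v).symm b : Fin n) : ℕ) →
      (((sortPerm w).symm b : Fin n) : ℕ) = (((sortPerm v).symm b : Fin n) : ℕ) := by
    intro b hb
    have hsets : (univ.filter fun c => beats w c b) = (univ.filter fun c => beats v c b) := by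
      ext c
      simp only [mem_filter, mem_univ, true_and]
      by_cases hc : c = i
      · subst hc
        exact iff_of_true (hbeats_w b hb) (hbeats_v b hb)
      · unfold beats
        rw [hwdef, Function.update_of_ne hc, Function.update_of_ne (hbne b hb)]
    rw [rank_eq_card w b, hsets, ← rank_eq_card v b]
  have hτσ : ∀ (m : ℕ) (hm : m < n), k ≤ m →
      sortPerm w ⟨m, hm⟩ = sortPerm v ⟨m, hm⟩ := by
    intro m hm hkm
    have hrv : (((sortPerm v).symm (sortPerm v ⟨m, hm⟩) : Fin n) : ℕ) = m := by
      rw [Equiv.symm_apply_apply]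
    have h1 : (((sortPerm w).symm (sortPerm v ⟨m, hm⟩) : Fin n) : ℕ) = m := by
      rw [hrank_eq (sortPerm v ⟨m, hm⟩) (by rw [hrv]; exact hkm)]
      exact hrv
    have h2 : (sortPerm w).symm (sortPerm v ⟨m, hm⟩) = ⟨m, hm⟩ := Fin.ext h1
    calc sortPerm w ⟨m, hm⟩ = sortPerm w ((sortPerm w).symm (sortPerm v ⟨m, hm⟩)) := by rw [h2]
      _ = sortPerm v ⟨m, hm⟩ := Equiv.apply_symm_apply _ _
  have hrankne : ∀ (m : ℕ) (hm : m < n), k ≤ m → sortPerm v ⟨m, hm⟩ ≠ i := by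
    intro m hm hkm
    apply hbne
    rw [Equiv.symm_apply_apply]
    exact hkm
  have hsv : ∀ m : ℕ, k ≤ m → sortedVal w m = sortedVal v m := by
    intro m hkm
    by_cases hm : m < n
    · rw [sortedVal, sortedVal, dif_pos hm, dif_pos hm, hτσ m hm hkm, hwdef,
        Function.update_of_ne (hrankne m hm hkm)]
    · rw [sortedVal, sortedVal, dif_neg hm, dif_neg hm]
  have hsb : ∀ m : ℕ, k ≤ m → sortedBud w B m = sortedBud v B m := by
    intro m hkm
    by_cases hm : m < n
    · rw [sortedBud, sortedBud, dif_pos hm, dif_pos hm, hτσ m hm hkm]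
    · rw [sortedBud, sortedBud, dif_neg hm, dif_neg hm]
  -- sums over initial segments agree
  have hsplit : ∀ (w0 : Fin n → ℝ) (m : ℕ), m ≤ n →
      ∑ t ∈ range n, sortedBud w0 B t
        = ∑ t ∈ range m, sortedBud w0 B t + ∑ t ∈ Ico m n, sortedBud w0 B t := by
    intro w0 m hmn
    simp only [range_eq_Ico]
    exact (Finset.sum_Ico_consecutive _ (Nat.zero_le m) hmn).symm
  have hIco : ∀ m : ℕ, k ≤ m →
      ∑ t ∈ Ico m n, sortedBud w B t = ∑ t ∈ Ico m n, sortedBud v B t := by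
    intro m hkm
    exact Finset.sum_congr rfl fun t ht => hsb t (le_trans hkm (mem_Ico.mp ht).1)
  have hsumk : ∑ t ∈ range k, sortedBud w B t = ∑ t ∈ range k, sortedBud v B t := by
    have h1 := sum_sortedBud_all w B
    have h2 := sum_sortedBud_all v B
    have h3 := hIco k le_rfl
    have h4 := hsplit w k hk_le
    have h5 := hsplit v k hk_le
    linarith
  have hsumm : ∀ m : ℕ, k ≤ m → m ≤ n →
      ∑ t ∈ range m, sortedBud w B t = ∑ t ∈ range m, sortedBud v B t := by
    intro m h1 h2
    have e1 : ∑ t ∈ range m, sortedBud w B t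
        = ∑ t ∈ range k, sortedBud w B t + ∑ t ∈ Ico k m, sortedBud w B t := by
      simp only [range_eq_Ico]
      exact (Finset.sum_Ico_consecutive _ (Nat.zero_le k) h1).symm
    have e2 : ∑ t ∈ range m, sortedBud v B t
        = ∑ t ∈ range k, sortedBud v B t + ∑ t ∈ Ico k m, sortedBud v B t := by
      simp only [range_eq_Ico]
      exact (Finset.sum_Ico_consecutive _ (Nat.zero_le k) h1).symm
    have e3 : ∑ t ∈ Ico k m, sortedBud w B t = ∑ t ∈ Ico k m, sortedBud v B t :=
      Finset.sum_congr rfl fun t ht => hsb t (mem_Ico.mp ht).1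
    rw [e1, e2, e3, hsumk]
  -- the market clearing index is unchanged
  have hk' : kstar w B = k := by
    unfold kstar
    rw [Nat.findGreatest_eq_iff]
    refine ⟨hk_le, fun _ => ?_, fun m hm1 hm2 => ?_⟩
    · rw [hsumk]
      have hk1n : k - 1 < n := by omega
      by_cases hbi : sortPerm w ⟨k-1, hk1n⟩ = i
      · rw [sortedVal, dif_pos hk1n, hbi, hwdef, Function.update_self]
        exact hSu.le
      · rw [sortedVal, dif_pos hk1n, hwdef, Function.update_of_ne hbi]
        have hrw : (((sortPerm w).symm (sortPerm w ⟨k-1, hk1n⟩) : Fin n) : ℕ) = k - 1 := by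
          rw [Equiv.symm_apply_apply]
        have hrv : (((sortPerm v).symm (sortPerm w ⟨k-1, hk1n⟩) : Fin n) : ℕ) < k := by
          by_contra hcon
          push_neg at hcon
          have := hrank_eq (sortPerm w ⟨k-1, hk1n⟩) hcon
          omega
        have h5 := sortedVal_anti v
          (a := (((sortPerm v).symm (sortPerm w ⟨k-1, hk1n⟩) : Fin n) : ℕ)) (b := k-1)
          (by omega) hk1n
        have h6 : sortedVal v (k-1) ≤ v (sortPerm w ⟨k-1, hk1n⟩) := by
          rw [val_rank v (sortPerm w ⟨k-1, hk1n⟩)]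
          exact h5
        -- note : w (sortPerm w ⟨k-1,hk1n⟩) = v (...) already rewritten
        linarith
    · rw [hsumm m hm1.le hm2, hsv (m-1) (by omega)]
      exact hgreatest m hm1 hm2
  -- i's rank stays below k
  have hri : (((sortPerm w).symm i : Fin n) : ℕ) < k := by
    by_contra hcon
    push_neg at hcon
    have hmn : (((sortPerm w).symm i : Fin n) : ℕ) < n := ((sortPerm w).symm i).isLt
    have h1 := hτσ _ hmn hcon
    have h2 : sortPerm w ⟨(((sortPerm w).symm i : Fin n) : ℕ), hmn⟩ = i := by
      rw [Fin.eta ((sortPerm w).symm i) hmn, Equiv.apply_symm_apply]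
    rw [h2] at h1
    have h3 : (sortPerm v).symm i = ⟨(((sortPerm w).symm i : Fin n) : ℕ), hmn⟩ := by
      exact (Equiv.symm_apply_eq _).mpr h1
    rw [h3] at hj
    simp only [Fin.val_mk] at hj
    omega
  -- conclude
  have e1 : sortedBud w B (((sortPerm w).symm i : Fin n) : ℕ) = B i := (bud_rank w B i).symm
  have e2 : sortedBud v B (((sortPerm v).symm i : Fin n) : ℕ) = B i := (bud_rank v B i).symm
  simp only [UPA, allocSorted]
  rw [hk', hsumk, hsv k le_rfl, e1, e2]
  by_cases hcase : sortedVal v k < ∑ t ∈ range k, sortedBud v B t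
  · rw [if_pos hcase, if_pos hcase, if_pos hri, if_pos hj]
  · rw [if_neg hcase, if_neg hcase, if_pos hri, if_pos hj]

/-- the Myerson payments of the Uniform Price Auction respect
budgets: `π_i = v_i·x_i(v) − ∫_0^{v_i} x_i(u, v_{−i}) du ≤ B_i`. -/
theorem stmt7 {n : ℕ} (v B : Fin n → ℝ)
    (hv : ∀ i, 0 < v i) (hB : ∀ i, 0 < B i) (i : Fin n) :
    v i * UPA v B i -
      (∫ u in (0:ℝ)..(v i), UPA (Function.update v i u) B i) ≤ B i := by
  classical
  have hn : 0 < n := i.pos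
  set k := kstar v B with hkdef
  set S := ∑ t ∈ range k, sortedBud v B t with hSdef
  set j0 : ℕ := (((sortPerm v).symm i : Fin n) : ℕ) with hj0def
  have hk_le : k ≤ n := Nat.findGreatest_le n
  have hj0n : j0 < n := ((sortPerm v).symm i).isLt
  have nonneg : ∀ (w : Fin n → ℝ), 0 ≤ UPA w B i := fun w =>
    (allocSorted_bounds w B (fun r => (hB r).le) _).1
  have hint_nonneg0 : ∀ a b : ℝ, a ≤ b →
      0 ≤ ∫ u in a..b, UPA (Function.update v i u) B i := fun a b hab =>
    intervalIntegral.integral_nonneg_of_forall hab (fun u => nonneg _)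
  have hUPA : UPA v B i =
      (if sortedVal v k < S then (if j0 < k then sortedBud v B j0 / S else 0)
       else if j0 < k then sortedBud v B j0 / sortedVal v k
       else if j0 = k then 1 - S / sortedVal v k else 0) := rfl
  have hbudj0 : sortedBud v B j0 = B i := (bud_rank v B i).symm
  have hvi_rank : v i = sortedVal v j0 := val_rank v i
  by_cases hj : j0 < k
  · -- Case A : full winner
    set p := if sortedVal v k < S then S else sortedVal v k with hpdef
    have hk1 : 1 ≤ k := by omega
    have hS_lb : sortedBud v B j0 ≤ S :=
      Finset.single_le_sum (fun t _ => sortedBud_nonneg v B (fun r => (hB r).le) t)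
        (mem_range.mpr hj)
    have hSpos : 0 < S := by rw [hbudj0] at hS_lb; exact lt_of_lt_of_le (hB i) hS_lb
    have hPk : S ≤ sortedVal v (k-1) := by
      have hP0 : ∑ t ∈ range 0, sortedBud v B t ≤ sortedVal v (0-1) := by
        simp only [range_zero, sum_empty]
        rw [sortedVal, dif_pos hn]
        exact (hv _).le
      rw [hSdef, hkdef]
      unfold kstar
      exact Nat.findGreatest_spec
        (P := fun m => ∑ t ∈ range m, sortedBud v B t ≤ sortedVal v (m-1)) (Nat.zero_le n) hP0
    have hk1n : k - 1 < n := by omega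
    have hviS : S ≤ v i := by
      have h1 := sortedVal_anti v (a := j0) (b := k-1) (by omega) hk1n
      rw [hvi_rank]
      linarith
    have hp_pos : 0 < p := by
      rw [hpdef]
      by_cases hcase : sortedVal v k < S
      · rwa [if_pos hcase]
      · rw [if_neg hcase]
        exact lt_of_lt_of_le hSpos (not_lt.mp hcase)
    have hp_le : p ≤ v i := by
      rw [hpdef]
      by_cases hcase : sortedVal v k < S
      · rwa [if_pos hcase]
      · rw [if_neg hcase]
        by_cases hkn : k < n
        · have := sortedVal_anti v (a := j0) (b := k) (le_of_lt hj) hkn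
          rw [hvi_rank]; linarith
        · rw [sortedVal, dif_neg hkn]
          exact (hv i).le
    have hx : UPA v B i = B i / p := by
      rw [hUPA, hpdef]
      by_cases hcase : sortedVal v k < S
      · rw [if_pos hcase, if_pos hcase, if_pos hj, hbudj0]
      · rw [if_neg hcase, if_neg hcase, if_pos hj, hbudj0]
    -- integrability
    have hmeas := meas_UPA v B i
    have hii : ∀ a b : ℝ, IntervalIntegrable
        (fun u => UPA (Function.update v i u) B i) MeasureTheory.volume a b := by
      intro a b
      rw [intervalIntegrable_iff]
      have h1 : MeasureTheory.IntegrableOn (fun _ : ℝ => (1:ℝ)) (Set.uIoc a b)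
          MeasureTheory.volume := by
        apply (MeasureTheory.integrableOn_const_iff).mpr
        right
        exact measure_Ioc_lt_top
      apply MeasureTheory.Integrable.mono' h1 hmeas.aestronglyMeasurable.restrict
      apply MeasureTheory.ae_of_all
      intro u
      rw [Real.norm_eq_abs, abs_of_nonneg (nonneg _)]
      exact (allocSorted_bounds _ B (fun r => (hB r).le) _).2
    have hsplitint : (∫ u in (0:ℝ)..(v i), UPA (Function.update v i u) B i)
        = (∫ u in (0:ℝ)..p, UPA (Function.update v i u) B i)
          + ∫ u in p..(v i), UPA (Function.update v i u) B i :=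
      (intervalIntegral.integral_add_adjacent_intervals (hii 0 p) (hii p (v i))).symm
    have hconst : Set.EqOn (fun u => UPA (Function.update v i u) B i)
        (fun _ => B i / p) (Set.Ioc p (v i)) := by
      intro u hu
      have h := constancy v B hv hB i hj hu.1 hu.2
      simpa [hx] using h
    have hint2 : (∫ u in p..(v i), UPA (Function.update v i u) B i)
        = (v i - p) * (B i / p) := by
      rw [intervalIntegral.integral_of_le hp_le,
        MeasureTheory.setIntegral_congr_fun measurableSet_Ioc hconst,
        MeasureTheory.setIntegral_const, Real.volume_real_Ioc_of_le hp_le, smul_eq_mul]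
    have h0p : 0 ≤ ∫ u in (0:ℝ)..p, UPA (Function.update v i u) B i :=
      hint_nonneg0 0 p hp_pos.le
    have hBi : p * (B i / p) = B i := by field_simp
    have expand : v i * (B i / p)
        - ((∫ u in (0:ℝ)..p, UPA (Function.update v i u) B i) + (v i - p) * (B i / p))
        = B i - ∫ u in (0:ℝ)..p, UPA (Function.update v i u) B i := by
      have hp0 : p ≠ 0 := ne_of_gt hp_pos
      field_simp
      ring
    rw [hx, hsplitint, hint2, expand]
    linarith
  · by_cases hj2 : j0 = k ∧ ¬(sortedVal v k < S)
    · -- Case B : partial winner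
      have hvk : sortedVal v k = v i := by rw [← hj2.1]; exact hvi_rank.symm
      have hx : UPA v B i = 1 - S / v i := by
        rw [hUPA, if_neg hj2.2, if_neg hj, if_pos hj2.1, hvk]
      have hkn : k < n := by rw [← hj2.1]; exact hj0n
      have hnotP : ¬ (∑ t ∈ range (k+1), sortedBud v B t ≤ sortedVal v k) := by
        have h := Nat.findGreatest_is_greatest
          (P := fun m => ∑ t ∈ range m, sortedBud v B t ≤ sortedVal v (m-1))
          (n := n) (k := k+1) (Nat.lt_succ_self _) (by omega)
        exact h
      push_neg at hnotP
      rw [Finset.sum_range_succ] at hnotP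
      have hbudk : sortedBud v B k = B i := by rw [← hj2.1]; exact hbudj0
      rw [← hSdef, hbudk, hvk] at hnotP
      have hvi0 : v i ≠ 0 := ne_of_gt (hv i)
      have hmul : v i * (1 - S / v i) = v i - S := by
        field_simp
      rw [hx, hmul]
      have := hint_nonneg0 0 (v i) (hv i).le
      linarith
    · -- Case C : loser
      have hx : UPA v B i = 0 := by
        rw [hUPA]
        by_cases hcase : sortedVal v k < S
        · rw [if_pos hcase, if_neg hj]
        · have hj0k : j0 ≠ k := fun h => hj2 ⟨h, hcase⟩
          rw [if_neg hcase, if_neg hj, if_neg hj0k]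
      rw [hx]
      have := hint_nonneg0 0 (v i) (hv i).le
      have := hB i
      linarith
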